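/- For every positive integer k, the formal power series identity ∑_{n≥0} q^{2n} (q^{2n+2};q²)_∞ (q^{2n+2k};q²)_∞ / (q^{2n+1};q²)_∞² = ∑_{n≥0} (q^{2k-1};q²)_n q^n / (q;q²)_{n+1} holds. -/

import Mathlib

open Finset PowerSeries

/-- `(q^a; q^2)_n = ∏_{j<n} (1 - q^(a+2j))` as a formal power series in `q`. -/
noncomputable def P2 (a n : ℕ) : PowerSeries ℚ :=
  ∏ j ∈ Finset.range n, (1 - (PowerSeries.X : PowerSeries ℚ) ^ (a + 2 * j))

/-- `(q^a; q^2)_∞ = ∏_{j≥0} (1 - q^(a+2j))` (for `a ≥ 1`) as a formal power series: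
the coefficient of `q^m` is that of any sufficiently long partial product. -/
noncomputable def P2inf (a : ℕ) : PowerSeries ℚ :=
  PowerSeries.mk fun m => PowerSeries.coeff m (P2 a (m + 1))

noncomputable def Ssum (f : ℕ → PowerSeries ℚ) : PowerSeries ℚ :=
  PowerSeries.mk fun m => ∑ n ∈ Finset.range (m + 1), PowerSeries.coeff m (f n)

lemma coeff_Ssum (f : ℕ → PowerSeries ℚ) (m : ℕ) :
    PowerSeries.coeff m (Ssum f) = ∑ n ∈ Finset.range (m + 1), PowerSeries.coeff m (f n) :=
  PowerSeries.coeff_mk _ _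

/-- order hypothesis: the `n`-th term has order at least `n`. -/
def OrdF (f : ℕ → PowerSeries ℚ) : Prop := ∀ ⦃m n : ℕ⦄, m < n → PowerSeries.coeff m (f n) = 0

lemma Ssum_mul_left (f : ℕ → PowerSeries ℚ) (hf : OrdF f) (g : PowerSeries ℚ) :
    g * Ssum f = Ssum fun n => g * f n := by
  ext m
  rw [coeff_Ssum, PowerSeries.coeff_mul]
  have : ∀ p ∈ Finset.HasAntidiagonal.antidiagonal m,
      PowerSeries.coeff p.1 g * PowerSeries.coeff p.2 (Ssum f)
        = ∑ n ∈ Finset.range (m+1), PowerSeries.coeff p.1 g * PowerSeries.coeff p.2 (f n) := by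
    intro p hp
    rw [coeff_Ssum, Finset.mul_sum]
    have hp2 : p.2 ≤ m := by
      have := Finset.HasAntidiagonal.mem_antidiagonal.mp hp; omega
    apply Finset.sum_subset
    · intro x hx
      simp only [Finset.mem_range] at *
      omega
    · intro x _ hx
      simp only [Finset.mem_range] at hx
      rw [hf (show p.2 < x by omega)]
      ring
  rw [Finset.sum_congr rfl this, Finset.sum_comm]
  apply Finset.sum_congr rfl
  intro n _
  rw [PowerSeries.coeff_mul]

lemma Ssum_swap (F : ℕ → ℕ → PowerSeries ℚ) :
    Ssum (fun n => Ssum fun j => F n j) = Ssum fun j => Ssum fun n => F n j := by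
  ext m
  simp only [coeff_Ssum]
  exact Finset.sum_comm

lemma Ssum_congr {f g : ℕ → PowerSeries ℚ} (h : ∀ n, f n = g n) : Ssum f = Ssum g := by
  ext m; simp only [coeff_Ssum, h]

lemma P2_succ (a n : ℕ) : P2 a (n+1) = P2 a n * (1 - X ^ (a + 2*n)) :=
  Finset.prod_range_succ _ _

lemma P2_zero (a : ℕ) : P2 a 0 = 1 := Finset.prod_range_zero _

lemma P2_one (a : ℕ) : P2 a 1 = 1 - X ^ a := by
  simp [P2]

lemma P2_add (a n t : ℕ) : P2 a (n + t) = P2 a n * P2 (a + 2*n) t := by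
  rw [P2, P2, P2, Finset.prod_range_add]
  congr 1
  apply Finset.prod_congr rfl
  intro j _
  congr 2
  ring

lemma constantCoeff_P2 (a n : ℕ) (ha : 1 ≤ a) : constantCoeff (P2 a n) = 1 := by
  rw [P2, map_prod]
  apply Finset.prod_eq_one
  intro j _
  have : a + 2*j ≠ 0 := by omega
  simp [this]; omega

lemma coeff_P2_stable (a m : ℕ) (ha : 1 ≤ a) : ∀ N, m ≤ N →
    coeff m (P2 a N) = coeff m (P2 a m) := by
  intro N
  induction N with
  | zero => intro h; rw [Nat.le_zero.mp h]
  | succ N ih =>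
    intro h
    rcases Nat.lt_or_ge m (N+1) with h' | h'
    · have hm : m ≤ N := by omega
      rw [P2_succ, mul_sub, mul_one, map_sub, ih hm]
      have : coeff m (P2 a N * X ^ (a + 2*N)) = 0 := by
        rw [PowerSeries.coeff_mul_X_pow']
        have : ¬ (a + 2*N ≤ m) := by omega
        simp [this]
      rw [this, sub_zero]
    · have : m = N + 1 := by omega
      subst this; rfl

lemma coeff_P2inf (a m n : ℕ) (ha : 1 ≤ a) (h : m ≤ n) :
    coeff m (P2inf a) = coeff m (P2 a n) := by
  rw [P2inf, PowerSeries.coeff_mk, coeff_P2_stable a m ha (m+1) (by omega),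
    coeff_P2_stable a m ha n h]

lemma constantCoeff_P2inf (a : ℕ) (ha : 1 ≤ a) : constantCoeff (P2inf a) = 1 := by
  have := coeff_P2inf a 0 0 ha le_rfl
  rw [PowerSeries.coeff_zero_eq_constantCoeff] at this
  rw [this, P2_zero, map_one]

lemma coeff_mul_stable {u v : PowerSeries ℚ} (f : PowerSeries ℚ) (m : ℕ)
    (h : ∀ j ≤ m, coeff j u = coeff j v) :
    coeff m (f * u) = coeff m (f * v) := by
  rw [PowerSeries.coeff_mul, PowerSeries.coeff_mul]
  apply Finset.sum_congr rfl
  intro p hp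
  have := Finset.HasAntidiagonal.mem_antidiagonal.mp hp
  rw [h p.2 (by omega)]

lemma P2inf_split (a n : ℕ) (ha : 1 ≤ a) : P2inf a = P2 a n * P2inf (a + 2*n) := by
  ext m
  rw [coeff_mul_stable (P2 a n) m (fun j hj => coeff_P2inf (a+2*n) j (m+1) (by omega) (by omega)),
    ← P2_add, coeff_P2inf a m (n + (m+1)) ha (by omega)]

lemma P2inf_step (a : ℕ) (ha : 1 ≤ a) : P2inf a = (1 - X ^ a) * P2inf (a + 2) := by
  have := P2inf_split a 1 ha
  rwa [P2_one] at this

lemma coeff_P2_high (a m : ℕ) (h : m < a) (n : ℕ) :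
    coeff m (P2 a n) = if m = 0 then 1 else 0 := by
  induction n with
  | zero => rw [P2_zero, PowerSeries.coeff_one]
  | succ n ih =>
    rw [P2_succ, mul_sub, mul_one, map_sub, ih]
    have h2 : coeff m (P2 a n * X ^ (a + 2*n)) = 0 := by
      rw [PowerSeries.coeff_mul_X_pow']
      have : ¬ (a + 2*n ≤ m) := by omega
      simp [this]
    rw [h2, sub_zero]

lemma coeff_P2inf_high (a m : ℕ) (h : m < a) :
    coeff m (P2inf a) = if m = 0 then 1 else 0 := by
  have ha : 1 ≤ a := by omega
  rw [coeff_P2inf a m m ha le_rfl, coeff_P2_high a m h]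

-- generic helpers about inverses in PowerSeries over ℚ

lemma div_eq_div {a b c d : PowerSeries ℚ}
    (hb : constantCoeff b ≠ 0) (hd : constantCoeff d ≠ 0)
    (h : a * d = c * b) : a * b⁻¹ = c * d⁻¹ := by
  rw [PowerSeries.eq_mul_inv_iff_mul_eq hd]
  calc a * b⁻¹ * d = a * d * b⁻¹ := by ring
    _ = c * b * b⁻¹ := by rw [h]
    _ = c * (b * b⁻¹) := by ring
    _ = c := by rw [PowerSeries.mul_inv_cancel b hb, mul_one]

lemma coeff_inv_delta {f : PowerSeries ℚ} (m : ℕ)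
    (h : ∀ i ≤ m, coeff i f = if i = 0 then 1 else 0) :
    ∀ j ≤ m, coeff j f⁻¹ = if j = 0 then 1 else 0 := by
  have h0 : constantCoeff f = 1 := by
    have := h 0 (Nat.zero_le m); simpa using this
  intro j hj
  have hc : f * f⁻¹ = 1 := PowerSeries.mul_inv_cancel f (by rw [h0]; exact one_ne_zero)
  have := congrArg (coeff j) hc
  rw [PowerSeries.coeff_mul] at this
  rw [Finset.sum_eq_single (0, j)] at this
  · simp only at this
    rw [h 0 (Nat.zero_le m)] at this
    simp only [if_true, eq_self_iff_true, one_mul] at this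
    rw [this, PowerSeries.coeff_one]
  · intro p hp hne
    have hpm := Finset.HasAntidiagonal.mem_antidiagonal.mp hp
    have hp1 : p.1 ≠ 0 := by
      intro h0'
      apply hne
      have : p.2 = j := by omega
      rw [← h0', ← this]
    rw [h p.1 (by omega)]
    simp [hp1]
  · intro hmem
    exfalso; apply hmem
    rw [Finset.HasAntidiagonal.mem_antidiagonal]
    simp

lemma coeff_mul_delta {f g : PowerSeries ℚ} (m : ℕ)
    (hf : ∀ i ≤ m, coeff i f = if i = 0 then 1 else 0)
    (hg : ∀ i ≤ m, coeff i g = if i = 0 then 1 else 0) :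
    coeff m (f * g) = if m = 0 then 1 else 0 := by
  rw [PowerSeries.coeff_mul]
  rcases Nat.eq_zero_or_pos m with rfl | hm
  · simp only [Finset.Nat.antidiagonal_zero, Finset.sum_singleton]
    rw [hf 0 le_rfl, hg 0 le_rfl]
    simp
  · rw [Finset.sum_eq_zero, if_neg (by omega)]
    intro p hp
    have hpm := Finset.HasAntidiagonal.mem_antidiagonal.mp hp
    rcases Nat.eq_zero_or_pos p.1 with h1 | h1
    · have h2 : p.2 ≠ 0 := by omega
      rw [hg p.2 (by omega), if_neg h2, mul_zero]
    · rw [hf p.1 (by omega), if_neg (by omega), zero_mul]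

/-- Uniqueness for the q-difference equation
`(1 - X^β) u β = (1 - X^(α+β)) u (β+2)`. -/
lemma FE_unique (α : ℕ) (u v : ℕ → PowerSeries ℚ)
    (hu : ∀ β, 1 ≤ β → (1 - X ^ β) * u β = (1 - X ^ (α + β)) * u (β + 2))
    (hv : ∀ β, 1 ≤ β → (1 - X ^ β) * v β = (1 - X ^ (α + β)) * v (β + 2))
    (hb : ∀ m β, m < β → coeff m (u β) = coeff m (v β)) :
    ∀ β, 1 ≤ β → u β = v β := by
  have key : ∀ m β, 1 ≤ β → coeff m (u β) = coeff m (v β) := by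
    intro m
    induction m using Nat.strong_induction_on with
    | _ m IH =>
      -- inner induction on d
      have inner : ∀ d β, 1 ≤ β → m < β + 2*d → coeff m (u β) = coeff m (v β) := by
        intro d
        induction d with
        | zero => intro β hβ hlt; exact hb m β (by omega)
        | succ d ihd =>
          intro β hβ hlt
          rcases Nat.lt_or_ge m β with h' | h'
          · exact hb m β h'
          -- β ≤ m
          have hu' := congrArg (coeff m) (hu β hβ)
          have hv' := congrArg (coeff m) (hv β hβ)
          rw [sub_mul, one_mul, map_sub, sub_mul, one_mul, map_sub,
            PowerSeries.coeff_X_pow_mul', PowerSeries.coeff_X_pow_mul'] at hu' hv'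
          rw [if_pos h'] at hu' hv'
          have e1 : coeff m (u (β+2)) = coeff m (v (β+2)) :=
            ihd (β+2) (by omega) (by omega)
          have e2 : coeff (m - β) (u β) = coeff (m - β) (v β) :=
            IH (m - β) (by omega) β hβ
          have e3 : (if α + β ≤ m then coeff (m - (α+β)) (u (β+2)) else 0)
              = (if α + β ≤ m then coeff (m - (α+β)) (v (β+2)) else 0) := by
            split_ifs with hc
            · exact IH (m - (α+β)) (by omega) (β+2) (by omega)
            · rfl
          rw [e1, e2, e3] at hu'
          linarith [hu', hv']
      exact fun β hβ => inner (m+1) β hβ (by omega)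
  intro β hβ
  ext m
  exact key m β hβ

lemma ccXpow (e : ℕ) (he : 1 ≤ e) : constantCoeff (1 - X ^ e : PowerSeries ℚ) = 1 := by
  rw [map_sub, map_one, map_pow, constantCoeff_X, zero_pow (by omega), sub_zero]

lemma oneSubXpow_ne (e : ℕ) (he : 1 ≤ e) : (1 - X ^ e : PowerSeries ℚ) ≠ 0 := by
  intro h
  have := ccXpow e he
  rw [h, map_zero] at this
  simp at this

noncomputable def cq (α n : ℕ) : PowerSeries ℚ := P2 α n * (P2 2 n)⁻¹

lemma cq_zero (α : ℕ) : cq α 0 = 1 := by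
  rw [cq, P2_zero, P2_zero, one_mul, inv_one]

lemma cKey (α n : ℕ) :
    cq α (n+1) * (1 - X ^ (2*n+2)) = cq α n * (1 - X ^ (α + 2*n)) := by
  have h2 : (2:ℕ) + 2*n = 2*n+2 := by ring
  rw [cq, cq, P2_succ, P2_succ, h2, PowerSeries.mul_inv_rev]
  have hcan : (1 - X ^ (2*n+2) : PowerSeries ℚ)⁻¹ * (1 - X ^ (2*n+2)) = 1 :=
    PowerSeries.inv_mul_cancel _ (by rw [ccXpow (2*n+2) (by omega)]; exact one_ne_zero)
  calc P2 α n * (1 - X ^ (α + 2*n)) * ((1 - X ^ (2*n+2))⁻¹ * (P2 2 n)⁻¹) * (1 - X ^ (2*n+2))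
      = P2 α n * (P2 2 n)⁻¹ * (1 - X ^ (α + 2*n)) * ((1 - X ^ (2*n+2))⁻¹ * (1 - X ^ (2*n+2))) := by
        ring
    _ = P2 α n * (P2 2 n)⁻¹ * (1 - X ^ (α + 2*n)) := by rw [hcan, mul_one]

lemma key_step (α β i : ℕ) :
    cq α (i+1) * X ^ (β*(i+1)) - X ^ β * (cq α i * X ^ (β*i))
      = cq α (i+1) * X ^ ((β+2)*(i+1)) - X ^ (α+β) * (cq α i * X ^ ((β+2)*i)) := by
  have hc := cKey α i
  linear_combination (X ^ (β*(i+1)) : PowerSeries ℚ) * hc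

lemma ordf_mulXpow (c : ℕ → PowerSeries ℚ) (e : ℕ → ℕ) (he : ∀ n, n ≤ e n) :
    OrdF (fun n => c n * X ^ (e n)) := by
  intro m n hmn
  rw [PowerSeries.coeff_mul_X_pow']
  have : ¬ (e n ≤ m) := by have := he n; omega
  simp [this]

lemma coeff_XpowMul_small (g : PowerSeries ℚ) (e d m : ℕ) (h : m < e + d) :
    coeff m (X ^ e * (g * X ^ d)) = 0 := by
  rw [PowerSeries.coeff_X_pow_mul']
  split_ifs with hc
  · rw [PowerSeries.coeff_mul_X_pow']
    have : ¬ (d ≤ m - e) := by omega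
    simp [this]
  · rfl

lemma hFE (α β : ℕ) (hβ : 1 ≤ β) :
    (1 - X ^ β) * Ssum (fun n => cq α n * X ^ (β*n))
      = (1 - X ^ (α+β)) * Ssum (fun n => cq α n * X ^ ((β+2)*n)) := by
  have ord1 : OrdF (fun n => cq α n * X ^ (β*n)) :=
    ordf_mulXpow _ _ (fun n => by nlinarith)
  have ord2 : OrdF (fun n => cq α n * X ^ ((β+2)*n)) :=
    ordf_mulXpow _ _ (fun n => by nlinarith)
  rw [sub_mul, sub_mul, one_mul, one_mul, Ssum_mul_left _ ord1 (X ^ β),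
    Ssum_mul_left _ ord2 (X ^ (α+β))]
  ext m
  rw [map_sub, map_sub, coeff_Ssum, coeff_Ssum, coeff_Ssum, coeff_Ssum]
  rw [Finset.sum_range_succ' (fun n => coeff m (cq α n * X ^ (β*n))) m,
    Finset.sum_range_succ' (fun n => coeff m (cq α n * X ^ ((β+2)*n))) m,
    Finset.sum_range_succ (fun n => coeff m (X ^ β * (cq α n * X ^ (β*n)))) m,
    Finset.sum_range_succ (fun n => coeff m (X ^ (α+β) * (cq α n * X ^ ((β+2)*n)))) m]
  rw [coeff_XpowMul_small _ β (β*m) m (by nlinarith),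
    coeff_XpowMul_small _ (α+β) ((β+2)*m) m (by nlinarith)]
  have e : ∑ k ∈ Finset.range m, ((coeff m) (cq α (k + 1) * X ^ (β * (k + 1)))
        - (coeff m) (X ^ β * (cq α k * X ^ (β * k))))
      = ∑ k ∈ Finset.range m, ((coeff m) (cq α (k + 1) * X ^ ((β+2) * (k + 1)))
        - (coeff m) (X ^ (α+β) * (cq α k * X ^ ((β+2) * k)))) :=
    Finset.sum_congr rfl (fun i _ => by rw [← map_sub, ← map_sub, key_step α β i])
  rw [Finset.sum_sub_distrib, Finset.sum_sub_distrib] at e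
  have hab : (coeff m) (cq α 0 * X ^ (β * 0)) = (coeff m) (cq α 0 * X ^ ((β + 2) * 0)) := by
    rw [Nat.mul_zero, Nat.mul_zero]
  linarith

lemma qBinom (α β : ℕ) (hα : 1 ≤ α) (hβ : 1 ≤ β) :
    P2inf (α+β) * (P2inf β)⁻¹ = Ssum (fun n => cq α n * X ^ (β*n)) := by
  apply FE_unique α (fun β => P2inf (α+β) * (P2inf β)⁻¹)
    (fun β => Ssum (fun n => cq α n * X ^ (β*n))) _ _ _ β hβ
  · -- hu
    intro b hb
    have hs1 : P2inf (α+b) = (1 - X ^ (α+b)) * P2inf (α+b+2) := by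
      have := P2inf_step (α+b) (by omega)
      rwa [show α + b + 2 = α + b + 2 from rfl] at this
    have hs2 : P2inf b = (1 - X ^ b) * P2inf (b+2) := P2inf_step b hb
    have hinv : (1 - X ^ b) * (P2inf b)⁻¹ = (P2inf (b+2))⁻¹ := by
      rw [hs2, PowerSeries.mul_inv_rev]
      calc (1 - X ^ b) * ((P2inf (b+2))⁻¹ * (1 - X ^ b)⁻¹)
          = (P2inf (b+2))⁻¹ * ((1 - X ^ b) * (1 - X ^ b)⁻¹) := by ring
        _ = (P2inf (b+2))⁻¹ := by
            rw [PowerSeries.mul_inv_cancel _ (by rw [ccXpow b hb]; exact one_ne_zero), mul_one]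
    calc (1 - X ^ b) * (P2inf (α+b) * (P2inf b)⁻¹)
        = P2inf (α+b) * ((1 - X ^ b) * (P2inf b)⁻¹) := by ring
      _ = P2inf (α+b) * (P2inf (b+2))⁻¹ := by rw [hinv]
      _ = (1 - X ^ (α+b)) * (P2inf (α+(b+2)) * (P2inf (b+2))⁻¹) := by
          rw [show α + (b+2) = α + b + 2 by ring, hs1]; ring
  · -- hv
    intro b hb
    exact hFE α b hb
  · -- hb
    intro m b hmb
    have hb1 : 1 ≤ b := by omega
    have hLu : coeff m (P2inf (α+b) * (P2inf b)⁻¹) = if m = 0 then 1 else 0 := by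
      apply coeff_mul_delta
      · intro i hi
        exact coeff_P2inf_high (α+b) i (by omega)
      · apply coeff_inv_delta
        intro i hi
        exact coeff_P2inf_high b i (by omega)
    rw [hLu, coeff_Ssum]
    rw [Finset.sum_eq_single 0]
    · rw [cq_zero, Nat.mul_zero, pow_zero, one_mul, PowerSeries.coeff_one]
    · intro n _ hn0
      rw [PowerSeries.coeff_mul_X_pow']
      have hn1 : 1 ≤ n := Nat.one_le_iff_ne_zero.mpr hn0
      have hbn : b ≤ b * n := Nat.le_mul_of_pos_right _ (by omega)
      have : ¬ (b * n ≤ m) := by omega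
      simp [this]
    · intro h0
      simp at h0

/-- The Andrews–El Bachraoui series
`F_{k,1}(q) = ∑_{n≥0} q^{2n} (q^{2n+2};q²)_∞ (q^{2n+2k};q²)_∞ / (q^{2n+1};q²)_∞²`,
defined coefficientwise (the `n`-th term has order at least `2n`). -/
noncomputable def AEB (k : ℕ) : PowerSeries ℚ :=
  PowerSeries.mk fun m => ∑ n ∈ Finset.range (m + 1),
    PowerSeries.coeff m
      ((PowerSeries.X : PowerSeries ℚ) ^ (2 * n) * P2inf (2 * n + 2) *
        P2inf (2 * n + 2 * k) * (P2inf (2 * n + 1) ^ 2)⁻¹)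

lemma ccP2inf_ne (a : ℕ) (ha : 1 ≤ a) : constantCoeff (P2inf a) ≠ 0 := by
  rw [constantCoeff_P2inf a ha]; exact one_ne_zero

lemma ccP2_ne (a n : ℕ) (ha : 1 ≤ a) : constantCoeff (P2 a n) ≠ 0 := by
  rw [constantCoeff_P2 a n ha]; exact one_ne_zero

/-- `D n = (q^{2n+2};q^2)_∞ / (q^{2n+1};q^2)_∞` splits off the finite part. -/
lemma D_split (n : ℕ) :
    P2inf (2*n+2) * (P2inf (2*n+1))⁻¹
      = (P2inf 2 * (P2inf 1)⁻¹) * cq 1 n := by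
  rw [cq]
  have h1 : P2inf 1 = P2 1 n * P2inf (2*n+1) := by
    have := P2inf_split 1 n (le_refl 1)
    rwa [show 1 + 2*n = 2*n+1 by ring] at this
  have h2 : P2inf 2 = P2 2 n * P2inf (2*n+2) := by
    have := P2inf_split 2 n (by omega)
    rwa [show 2 + 2*n = 2*n+2 by ring] at this
  have key : P2inf (2*n+2) * (P2 2 n * P2inf 1)
      = (P2inf 2 * P2 1 n) * P2inf (2*n+1) := by
    rw [h1, h2]; ring
  calc P2inf (2*n+2) * (P2inf (2*n+1))⁻¹
      = (P2inf 2 * P2 1 n) * (P2 2 n * P2inf 1)⁻¹ := by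
        apply div_eq_div _ _ key
        · exact ccP2inf_ne (2*n+1) (by omega)
        · rw [map_mul]
          exact mul_ne_zero (ccP2_ne 2 n (by omega)) (ccP2inf_ne 1 (le_refl 1))
    _ = P2inf 2 * (P2inf 1)⁻¹ * (P2 1 n * (P2 2 n)⁻¹) := by
        rw [PowerSeries.mul_inv_rev]; ring

/-- the inner sum over `n` collapses. -/
lemma W_eval (j : ℕ) :
    (P2inf 2 * (P2inf 1)⁻¹) * (P2inf (1+(2*j+2)) * (P2inf (2*j+2))⁻¹)
      = P2 2 j * (P2 1 (j+1))⁻¹ := by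
  have h1 : P2inf 1 = P2 1 (j+1) * P2inf (1+(2*j+2)) := by
    have := P2inf_split 1 (j+1) (le_refl 1)
    rwa [show 1 + 2*(j+1) = 1+(2*j+2) by ring] at this
  have h2 : P2inf 2 = P2 2 j * P2inf (2*j+2) := by
    have := P2inf_split 2 j (by omega)
    rwa [show 2 + 2*j = 2*j+2 by ring] at this
  have key : (P2inf 2 * P2inf (1+(2*j+2))) * P2 1 (j+1)
      = P2 2 j * (P2inf (2*j+2) * P2inf 1) := by
    rw [h1, h2]; ring
  calc (P2inf 2 * (P2inf 1)⁻¹) * (P2inf (1+(2*j+2)) * (P2inf (2*j+2))⁻¹)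
      = (P2inf 2 * P2inf (1+(2*j+2))) * (P2inf (2*j+2) * P2inf 1)⁻¹ := by
        rw [PowerSeries.mul_inv_rev]; ring
    _ = P2 2 j * (P2 1 (j+1))⁻¹ := by
        apply div_eq_div _ _ key
        · rw [map_mul]
          exact mul_ne_zero (ccP2inf_ne (2*j+2) (by omega)) (ccP2inf_ne 1 (le_refl 1))
        · exact ccP2_ne 1 (j+1) (le_refl 1)

/-- For every `k ≥ 1`,
`F_{k,1}(q) = ∑_{n≥0} (q^{2k-1};q²)_n q^n / (q;q²)_{n+1}`
as formal power series in `q` (the right-hand side is also defined coefficientwise,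
its `n`-th term having order at least `n`). -/
theorem stmt_6 (k : ℕ) (hk : 1 ≤ k) :
    AEB k = PowerSeries.mk fun m => ∑ n ∈ Finset.range (m + 1),
      PowerSeries.coeff m
        (P2 (2 * k - 1) n * (PowerSeries.X : PowerSeries ℚ) ^ n * (P2 1 (n + 1))⁻¹) := by
  set α := 2 * k - 1 with hαdef
  have hα : 1 ≤ α := by omega
  have hAEB : AEB k = Ssum (fun n =>
      (PowerSeries.X : PowerSeries ℚ) ^ (2 * n) * P2inf (2 * n + 2) *
        P2inf (2 * n + 2 * k) * (P2inf (2 * n + 1) ^ 2)⁻¹) := rfl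
  rw [hAEB]
  have hRHS : (PowerSeries.mk fun m => ∑ n ∈ Finset.range (m + 1),
      PowerSeries.coeff m
        (P2 (2 * k - 1) n * (PowerSeries.X : PowerSeries ℚ) ^ n * (P2 1 (n + 1))⁻¹))
      = Ssum (fun j => P2 α j * X ^ j * (P2 1 (j+1))⁻¹) := rfl
  rw [hRHS]
  -- step 1: rewrite each AEB term using the q-binomial theorem
  have step1 : ∀ n, (PowerSeries.X : PowerSeries ℚ) ^ (2 * n) * P2inf (2 * n + 2) *
        P2inf (2 * n + 2 * k) * (P2inf (2 * n + 1) ^ 2)⁻¹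
      = Ssum (fun j => (X ^ (2*n) * (P2inf (2*n+2) * (P2inf (2*n+1))⁻¹))
          * (cq α j * X ^ ((2*n+1)*j))) := by
    intro n
    have hG : P2inf (α+(2*n+1)) * (P2inf (2*n+1))⁻¹
        = Ssum (fun j => cq α j * X ^ ((2*n+1)*j)) := qBinom α (2*n+1) hα (by omega)
    have hord : OrdF (fun j => cq α j * X ^ ((2*n+1)*j)) :=
      ordf_mulXpow _ _ (fun j => by nlinarith)
    rw [← Ssum_mul_left _ hord, ← hG]
    rw [show 2*n+2*k = α+(2*n+1) by omega, pow_two, PowerSeries.mul_inv_rev]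
    ring
  rw [Ssum_congr step1, Ssum_swap]
  -- step 2: rearrange the inner terms and collapse the inner sum
  have step2 : ∀ j, Ssum (fun n => (X ^ (2*n) * (P2inf (2*n+2) * (P2inf (2*n+1))⁻¹))
          * (cq α j * X ^ ((2*n+1)*j)))
      = P2 α j * X ^ j * (P2 1 (j+1))⁻¹ := by
    intro j
    have e1 : ∀ n, (X ^ (2*n) * (P2inf (2*n+2) * (P2inf (2*n+1))⁻¹))
          * (cq α j * X ^ ((2*n+1)*j))
        = (cq α j * X ^ j) * ((P2inf 2 * (P2inf 1)⁻¹) * (cq 1 n * X ^ ((2*j+2)*n))) := by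
      intro n
      rw [D_split n]
      have hx : (X : PowerSeries ℚ) ^ (2*n) * X ^ ((2*n+1)*j) = X ^ j * X ^ ((2*j+2)*n) := by
        rw [← pow_add, ← pow_add]
        congr 1
        ring
      linear_combination (cq α j * (P2inf 2 * (P2inf 1)⁻¹) * cq 1 n) * hx
    rw [Ssum_congr e1]
    have hord2 : OrdF (fun n => (P2inf 2 * (P2inf 1)⁻¹) * (cq 1 n * X ^ ((2*j+2)*n))) := by
      intro m n hmn
      show (coeff m) ((P2inf 2 * (P2inf 1)⁻¹) * (cq 1 n * X ^ ((2*j+2)*n))) = 0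
      rw [show (P2inf 2 * (P2inf 1)⁻¹) * (cq 1 n * X ^ ((2*j+2)*n))
        = ((P2inf 2 * (P2inf 1)⁻¹) * cq 1 n) * X ^ ((2*j+2)*n) by ring]
      rw [PowerSeries.coeff_mul_X_pow']
      have : ¬ ((2*j+2)*n ≤ m) := by nlinarith
      simp [this]
    rw [← Ssum_mul_left _ hord2 (cq α j * X ^ j)]
    have hord3 : OrdF (fun n => cq 1 n * X ^ ((2*j+2)*n)) :=
      ordf_mulXpow _ _ (fun n => by nlinarith)
    rw [← Ssum_mul_left _ hord3 (P2inf 2 * (P2inf 1)⁻¹)]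
    rw [← qBinom 1 (2*j+2) (le_refl 1) (by omega), W_eval j, cq]
    have hc : (P2 2 j)⁻¹ * P2 2 j = 1 := PowerSeries.inv_mul_cancel _ (ccP2_ne 2 j (by omega))
    linear_combination (P2 α j * X ^ j * (P2 1 (j+1))⁻¹) * hc
  rw [Ssum_congr step2]
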